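/- Let n, d, p be positive integers, F ∈ ℝ^{n×d}, y ∈ ℝⁿ, and λ > 0. Define R_λ := (nλ I_d + Fᵀ F)^{-1} Fᵀ diag(y) and M_λ := λ · diag(y)(nλ I_n + F Fᵀ)^{-1} diag(y). Then for every U ∈ ℝ^{n×p} with unit-norm rows (diag(U Uᵀ) = 𝟏), the matrix X := R_λ U satisfies (1/n)‖F X‖² + λ‖X‖² ≤ (1/n)‖y‖². -/
import Mathlib


open Matrix Filter Finset
open scoped Classical

noncomputable section

/-- Frobenius inner product `⟨A, B⟩ = tr(Bᵀ A)` of real square matrices. -/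
def mip {d : ℕ} (A B : Matrix (Fin d) (Fin d) ℝ) : ℝ := (Bᵀ * A).trace

/-- Squared Frobenius norm of a real matrix. -/
def frobSq {m p : ℕ} (X : Matrix (Fin m) (Fin p) ℝ) : ℝ := ∑ i, ∑ j, (X i j) ^ 2

/-- Squared Euclidean norm of a real vector. -/
def vnormSq {n : ℕ} (v : Fin n → ℝ) : ℝ := ∑ i, (v i) ^ 2

/-- Euclidean norm of a real vector. -/
def vnorm {n : ℕ} (v : Fin n → ℝ) : ℝ := Real.sqrt (vnormSq v)

/-- Euclidean inner product of real vectors. -/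
def vip {n : ℕ} (u v : Fin n → ℝ) : ℝ := ∑ i, u i * v i

/-- `ddiag A` keeps the diagonal of `A`, setting off-diagonal entries to zero. -/
def ddiag {n : ℕ} (A : Matrix (Fin n) (Fin n) ℝ) : Matrix (Fin n) (Fin n) ℝ :=
  Matrix.diagonal fun i => A i i

/-- `rowNorms M` is the vector of Euclidean norms of the rows of `M` (`|M|`). -/
def rowNorms {n k : ℕ} (M : Matrix (Fin n) (Fin k) ℝ) : Fin n → ℝ :=
  fun i => Real.sqrt (∑ j, (M i j) ^ 2)

/-- For any feasible `U` of the PhaseCut problem, `X = R_λ U` satisfies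
`(1/n)‖F X‖² + λ‖X‖² ≤ (1/n)‖y‖²`. -/
theorem stmt13 {n d p : ℕ} (hn : 0 < n) (hd : 0 < d) (hp : 0 < p)
    (F : Matrix (Fin n) (Fin d) ℝ) (y : Fin n → ℝ) (lam : ℝ) (hlam : 0 < lam)
    (Rlam : Matrix (Fin d) (Fin n) ℝ)
    (hRlam : Rlam = (((n:ℝ) * lam) • (1 : Matrix (Fin d) (Fin d) ℝ) + Fᵀ * F)⁻¹
        * Fᵀ * Matrix.diagonal y)
    (Mlam : Matrix (Fin n) (Fin n) ℝ)
    (hMlam : Mlam = lam • (Matrix.diagonal y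
        * (((n:ℝ) * lam) • (1 : Matrix (Fin n) (Fin n) ℝ) + F * Fᵀ)⁻¹
        * Matrix.diagonal y))
    (U : Matrix (Fin n) (Fin p) ℝ) (hU : ∀ i, ∑ j, (U i j) ^ 2 = 1)
    (X : Matrix (Fin d) (Fin p) ℝ) (hX : X = Rlam * U) :
    (1 / (n:ℝ)) * frobSq (F * X) + lam * frobSq X ≤ (1 / (n:ℝ)) * vnormSq y := by
  set A : Matrix (Fin d) (Fin d) ℝ := ((n:ℝ) * lam) • 1 + Fᵀ * F with hA
  have hnl : (0:ℝ) < (n:ℝ) * lam := mul_pos (Nat.cast_pos.mpr hn) hlam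
  have hApd : A.PosDef := by
    have h1 : ((((n:ℝ) * lam) • (1 : Matrix (Fin d) (Fin d) ℝ))).PosDef := by
      rw [Matrix.smul_one_eq_diagonal]
      exact Matrix.posDef_diagonal_iff.mpr fun i => hnl
    have h2 : (Fᵀ * F).PosSemidef := by
      have := Matrix.posSemidef_conjTranspose_mul_self F
      rwa [Matrix.conjTranspose_eq_transpose_of_trivial] at this
    exact h1.add_posSemidef h2
  have hAunit : IsUnit A.det := hApd.det_pos.ne'.isUnit
  have hAX : A * X = Fᵀ * Matrix.diagonal y * U := by
    rw [hX, hRlam, ← Matrix.mul_assoc, ← Matrix.mul_assoc, ← Matrix.mul_assoc,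
      Matrix.mul_nonsing_inv _ hAunit, Matrix.one_mul]
  have key : ∀ j, (∑ i, ((F * X) i j) ^ 2) + ((n:ℝ) * lam) * (∑ k, (X k j) ^ 2)
      = ∑ i, (F * X) i j * (y i * U i j) := by
    intro j
    have h1 : ∑ k, X k j * ((A * X) k j)
        = ∑ k, X k j * ((Fᵀ * Matrix.diagonal y * U) k j) := by rw [hAX]
    have hAXentry : ∀ k, (A * X) k j = ((n:ℝ) * lam) * X k j + ∑ i, F i k * (F * X) i j := by
      intro k
      have hsplit : A * X = ((n:ℝ) * lam) • X + Fᵀ * (F * X) := by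
        rw [hA, Matrix.add_mul, Matrix.smul_mul, Matrix.one_mul, Matrix.mul_assoc]
      rw [hsplit]
      simp only [Matrix.add_apply, Matrix.smul_apply, smul_eq_mul, Matrix.mul_apply,
        Matrix.transpose_apply]
    have h2 : ∑ k, X k j * ((A * X) k j)
        = ((n:ℝ) * lam) * (∑ k, (X k j) ^ 2) + ∑ i, ((F * X) i j) ^ 2 := by
      calc ∑ k, X k j * ((A * X) k j)
          = ∑ k, (((n:ℝ) * lam) * (X k j) ^ 2 + ∑ i, X k j * (F i k * (F * X) i j)) := by
            refine Finset.sum_congr rfl fun k _ => ?_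
            rw [hAXentry k, mul_add, Finset.mul_sum]; ring_nf
        _ = ((n:ℝ) * lam) * (∑ k, (X k j) ^ 2) + ∑ i, ∑ k, X k j * (F i k * (F * X) i j) := by
            rw [Finset.sum_add_distrib, Finset.mul_sum, Finset.sum_comm]
        _ = ((n:ℝ) * lam) * (∑ k, (X k j) ^ 2) + ∑ i, ((F * X) i j) ^ 2 := by
            congr 1
            refine Finset.sum_congr rfl fun i _ => ?_
            have : ∑ k, X k j * (F i k * (F * X) i j) = (F * X) i j * ∑ k, F i k * X k j := by
              rw [Finset.mul_sum]; exact Finset.sum_congr rfl fun k _ => by ring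
            rw [this, ← Matrix.mul_apply, ← pow_two]
    have h3 : ∑ k, X k j * ((Fᵀ * Matrix.diagonal y * U) k j)
        = ∑ i, (F * X) i j * (y i * U i j) := by
      have he : ∀ k, (Fᵀ * Matrix.diagonal y * U) k j = ∑ i, F i k * (y i * U i j) := by
        intro k
        rw [Matrix.mul_apply]
        simp only [Matrix.mul_diagonal, Matrix.transpose_apply, mul_assoc]
      calc ∑ k, X k j * ((Fᵀ * Matrix.diagonal y * U) k j)
          = ∑ k, ∑ i, X k j * (F i k * (y i * U i j)) := by
            refine Finset.sum_congr rfl fun k _ => ?_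
            rw [he k, Finset.mul_sum]
        _ = ∑ i, ∑ k, X k j * (F i k * (y i * U i j)) := Finset.sum_comm
        _ = ∑ i, (F * X) i j * (y i * U i j) := by
            refine Finset.sum_congr rfl fun i _ => ?_
            have : ∑ k, X k j * (F i k * (y i * U i j))
                = (y i * U i j) * ∑ k, F i k * X k j := by
              rw [Finset.mul_sum]; exact Finset.sum_congr rfl fun k _ => by ring
            rw [this, ← Matrix.mul_apply]; ring
    rw [h2, h3] at h1
    linarith [h1]
  have colbound : ∀ j, (∑ i, ((F * X) i j) ^ 2) + ((n:ℝ) * lam) * (∑ k, (X k j) ^ 2)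
      ≤ ∑ i, (y i * U i j) ^ 2 := by
    intro j
    set s := ∑ i, (F * X) i j * (y i * U i j) with hs
    set t2 := ∑ i, ((F * X) i j) ^ 2 with ht2def
    set c := ∑ i, (y i * U i j) ^ 2 with hc
    set w2 := ∑ k, (X k j) ^ 2 with hw2
    have hkey : t2 + ((n:ℝ) * lam) * w2 = s := key j
    have ht2 : 0 ≤ t2 := Finset.sum_nonneg fun i _ => sq_nonneg _
    have hw : 0 ≤ w2 := Finset.sum_nonneg fun k _ => sq_nonneg _
    have hcn : 0 ≤ c := Finset.sum_nonneg fun i _ => sq_nonneg _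
    have hcs : s ^ 2 ≤ t2 * c :=
      Finset.sum_mul_sq_le_sq_mul_sq Finset.univ (fun i => (F * X) i j) (fun i => y i * U i j)
    have ht2s : t2 ≤ s := by nlinarith
    have hsc : s ≤ c := by
      rcases eq_or_lt_of_le (le_trans ht2 ht2s) with h0 | h0
      · rw [← h0]; exact hcn
      · have : s * s ≤ s * c := by
          calc s * s = s ^ 2 := (sq s).symm
            _ ≤ t2 * c := hcs
            _ ≤ s * c := mul_le_mul_of_nonneg_right ht2s hcn
        exact le_of_mul_le_mul_left this h0
    linarith
  -- sum over columns
  have hnpos : (0:ℝ) < (n:ℝ) := Nat.cast_pos.mpr hn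
  have hsum : frobSq (F * X) + ((n:ℝ) * lam) * frobSq X ≤ vnormSq y := by
    have h1 : frobSq (F * X) = ∑ j, ∑ i, ((F * X) i j) ^ 2 := Finset.sum_comm
    have h2 : frobSq X = ∑ j, ∑ k, (X k j) ^ 2 := Finset.sum_comm
    have h3 : vnormSq y = ∑ j : Fin p, ∑ i, (y i * U i j) ^ 2 := by
      rw [Finset.sum_comm]
      refine Finset.sum_congr rfl fun i _ => ?_
      have : ∑ j : Fin p, (y i * U i j) ^ 2 = (y i) ^ 2 * ∑ j, (U i j) ^ 2 := by
        rw [Finset.mul_sum]; exact Finset.sum_congr rfl fun j _ => by ring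
      rw [this, hU i, mul_one]
    rw [h1, h2, h3, Finset.mul_sum, ← Finset.sum_add_distrib]
    exact Finset.sum_le_sum fun j _ => colbound j
  rw [div_mul_eq_mul_div, div_mul_eq_mul_div, div_add' _ _ _ hnpos.ne', one_mul, one_mul,
    div_le_div_iff_of_pos_right hnpos]
  nlinarith [hsum]
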